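/- Let G be a finite bipartite graph with nonempty parts L and R and edge set E, and set d₁ = |E|/|L| and d₂ = |E|/|R|. Then for every t ∈ (−1,1) with t ≠ 0 such that the Bethe Hessian satisfies H_G(t) ⪰ 0, one has (d₁−1)(d₂−1) ≤ 1/t². -/

import Mathlib

open scoped Classical

noncomputable section

namespace UNE

/-- The set of neighbors of a vertex set `S`. -/
def nbrSet {V : Type*} (G : SimpleGraph V) (S : Set V) : Set V :=
  {v | ∃ u ∈ S, G.Adj v u}

/-- The set of unique-neighbors of `S`: vertices with exactly one neighbor in `S`. -/
def uniqueNbrs {V : Type*} (G : SimpleGraph V) (S : Set V) : Set V :=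
  {v | ∃! u, u ∈ S ∧ G.Adj v u}

/-- Degree of a vertex. -/
def deg {V : Type*} (G : SimpleGraph V) (v : V) : ℕ :=
  {u | G.Adj v u}.ncard

/-- `L, R` is a bipartition of `G`. -/
structure IsBipartition {V : Type*} (G : SimpleGraph V) (L R : Set V) : Prop where
  disj : Disjoint L R
  cover : L ∪ R = Set.univ
  cross : ∀ ⦃u v⦄, G.Adj u v → (u ∈ L ∧ v ∈ R) ∨ (u ∈ R ∧ v ∈ L)

/-- `G` is `(c,d)`-biregular with parts `L` and `R`. -/
structure IsBiregular {V : Type*} (G : SimpleGraph V) (L R : Set V) (c d : ℕ)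
    extends IsBipartition G L R : Prop where
  degL : ∀ v ∈ L, deg G v = c
  degR : ∀ v ∈ R, deg G v = d

/-- Adjacency matrix over ℝ. -/
def adjMat {V : Type*} (G : SimpleGraph V) : Matrix V V ℝ :=
  Matrix.of fun u v => if G.Adj u v then (1 : ℝ) else 0

/-- Diagonal degree matrix. -/
def degMat {V : Type*} (G : SimpleGraph V) : Matrix V V ℝ :=
  Matrix.diagonal fun v => (deg G v : ℝ)

/-- Bethe Hessian `H_G(t) = (D - I) t² - t A + I`. -/
def betheHessian {V : Type*} (G : SimpleGraph V) (t : ℝ) : Matrix V V ℝ :=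
  t ^ 2 • (degMat G - 1) - t • adjMat G + 1

/-- The second largest eigenvalue (with multiplicity) of a square real matrix,
read off from the multiset of real roots of its characteristic polynomial. -/
def secondEig {V : Type*} [Fintype V] (A : Matrix V V ℝ) : ℝ :=
  (A.charpoly.roots.sort (· ≤ ·)).getD ((A.charpoly.roots.sort (· ≤ ·)).length - 2) 0

/-- Orientations of edges of `G`. -/
abbrev Orient {V : Type*} (G : SimpleGraph V) : Type _ := {p : V × V // G.Adj p.1 p.2}

/-- The non-backtracking matrix of `G`. -/
def nonBacktracking {V : Type*} (G : SimpleGraph V) : Matrix (Orient G) (Orient G) ℝ :=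
  Matrix.of fun e f => if e.1.2 = f.1.1 ∧ e.1.1 ≠ f.1.2 then (1 : ℝ) else 0

/-- Spectral radius: largest absolute value of a complex eigenvalue. -/
def specRad {n : Type*} [Fintype n] (A : Matrix n n ℝ) : ℝ :=
  (((A.map fun x => (x : ℂ)).charpoly.roots.map fun z => ‖z‖).toList.foldr max 0)

/-- `G` contains a bicycle (connected subgraph with one more edge than vertices)
on at most `ℓ` vertices. -/
def HasBicycle {V : Type*} (G : SimpleGraph V) (ℓ : ℝ) : Prop :=
  ∃ H : G.Subgraph, H.Connected ∧ H.edgeSet.ncard = H.verts.ncard + 1 ∧ (H.verts.ncard : ℝ) ≤ ℓ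

/-- `G` contains a cycle of length at most `ℓ`. -/
def HasCycleLe {V : Type*} (G : SimpleGraph V) (ℓ : ℝ) : Prop :=
  ∃ (v : V) (w : G.Walk v v), w.IsCycle ∧ (w.length : ℝ) ≤ ℓ

/-- Number of edges of `G` with both endpoints in `S`. -/
def eInside {V : Type*} (G : SimpleGraph V) (S : Set V) : ℕ :=
  {e ∈ G.edgeSet | ∀ v ∈ e, v ∈ S}.ncard

/-- Number of edges of `G` with one endpoint in `S` and the other in `T`. -/
def eBetween {V : Type*} (G : SimpleGraph V) (S T : Set V) : ℕ :=
  {e ∈ G.edgeSet | ∃ u ∈ S, ∃ v ∈ T, e = s(u, v)}.ncard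

/-- Unique-neighbor expansion profile `P_H(t)`. -/
def profile {V : Type*} (H : SimpleGraph V) (t : ℝ) : ℝ :=
  sInf {r | ∃ S : Set V, S.Nonempty ∧ (S.ncard : ℝ) ≤ t ∧
    r = ((uniqueNbrs H S).ncard : ℝ) / (S.ncard : ℝ)}


open Matrix

lemma deg_eq_degree {V : Type} [Fintype V] (G : SimpleGraph V) (v : V) :
    deg G v = G.degree v := by
  have : {u | G.Adj v u} = (G.neighborSet v : Set V) := rfl
  rw [deg, this, Set.ncard_eq_toFinset_card', Set.toFinset_card,
    SimpleGraph.card_neighborSet_eq_degree]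

lemma sum_degree_part {V : Type} [Fintype V] (G : SimpleGraph V) (L R : Set V)
    (hbip : IsBipartition G L R) :
    ∑ v ∈ L.toFinset, G.degree v = G.edgeFinset.card := by
  have hLR : ∀ ⦃u v⦄, u ∈ L → G.Adj u v → v ∈ R := by
    intro u v hu hadj
    rcases hbip.cross hadj with ⟨_, hv⟩ | ⟨hu', _⟩
    · exact hv
    · exact absurd hu (Set.disjoint_right.mp hbip.disj hu')
  have hnotL : ∀ ⦃u v⦄, u ∈ L → G.Adj u v → v ∉ L := fun u v hu hadj =>
    Set.disjoint_right.mp hbip.disj (hLR hu hadj)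
  simp only [SimpleGraph.degree]
  rw [← Finset.card_sigma]
  refine Finset.card_bij (fun p _ => s(p.1, p.2)) ?_ ?_ ?_
  · rintro ⟨v, u⟩ hp
    rw [Finset.mem_sigma] at hp
    simpa [SimpleGraph.mem_edgeFinset] using (SimpleGraph.mem_neighborFinset _ _ _).mp hp.2
  · rintro ⟨v, u⟩ hp ⟨v', u'⟩ hp' heq
    rw [Finset.mem_sigma, Set.mem_toFinset, SimpleGraph.mem_neighborFinset] at hp hp'
    rw [Sym2.eq_iff] at heq
    rcases heq with ⟨rfl, rfl⟩ | ⟨rfl, rfl⟩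
    · rfl
    · exact absurd hp'.1 (hnotL hp.1 hp.2)
  · intro e he
    rw [SimpleGraph.mem_edgeFinset] at he
    induction e with
    | _ u v =>
      have hadj : G.Adj u v := he
      rcases hbip.cross hadj with ⟨hu, _⟩ | ⟨_, hv⟩
      · exact ⟨⟨u, v⟩, by simp [Finset.mem_sigma, Set.mem_toFinset, hu, hadj]⟩
      · exact ⟨⟨v, u⟩, by simp [Finset.mem_sigma, Set.mem_toFinset, hv, hadj.symm], Sym2.eq_swap⟩

lemma quad_ineq {V : Type} [Fintype V] (G : SimpleGraph V) (L R : Set V)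
    (hbip : IsBipartition G L R) (t α β : ℝ)
    (hpsd : (betheHessian G t).PosSemidef) :
    0 ≤ t ^ 2 * ((G.edgeFinset.card : ℝ) * (α ^ 2 + β ^ 2)
          - (α ^ 2 * L.ncard + β ^ 2 * R.ncard))
        - t * (2 * α * β * G.edgeFinset.card)
        + (α ^ 2 * L.ncard + β ^ 2 * R.ncard) := by
  have hbipR : IsBipartition G R L :=
    ⟨hbip.disj.symm, by rw [Set.union_comm]; exact hbip.cover,
     fun u v h => (hbip.cross h).symm⟩
  have hLR : ∀ ⦃u v⦄, u ∈ L → G.Adj u v → v ∈ R := by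
    intro u v hu hadj
    rcases hbip.cross hadj with ⟨_, hv⟩ | ⟨hu', _⟩
    · exact hv
    · exact absurd hu (Set.disjoint_right.mp hbip.disj hu')
  have hRL : ∀ ⦃u v⦄, u ∈ R → G.Adj u v → v ∈ L := by
    intro u v hu hadj
    rcases hbip.cross hadj with ⟨hu', _⟩ | ⟨_, hv⟩
    · exact absurd hu (Set.disjoint_left.mp hbip.disj hu')
    · exact hv
  have hmemR : ∀ v, v ∉ L → v ∈ R := by
    intro v hv
    have h2 : v ∈ L ∪ R := hbip.cover ▸ Set.mem_univ v
    exact h2.resolve_left hv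
  set x : V → ℝ := fun v => if v ∈ L then α else β with hxdef
  have hxL : ∀ v ∈ L, x v = α := fun v hv => by simp [hxdef, hv]
  have hxR : ∀ v ∈ R, x v = β := fun v hv => by
    simp [hxdef, Set.disjoint_right.mp hbip.disj hv]
  set Lf := L.toFinset with hLf
  set Rf := R.toFinset with hRf
  have hdisjF : Disjoint Lf Rf := by
    simpa [hLf, hRf] using Set.disjoint_toFinset.mpr hbip.disj
  have hunivF : Lf ∪ Rf = Finset.univ := by
    ext v
    simp only [hLf, hRf, Finset.mem_union, Set.mem_toFinset, Finset.mem_univ, iff_true]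
    exact or_iff_not_imp_left.mpr (hmemR v)
  have split : ∀ f : V → ℝ, ∑ v, f v = ∑ v ∈ Lf, f v + ∑ v ∈ Rf, f v := by
    intro f
    rw [← Finset.sum_union hdisjF, hunivF]
  have hcardL : (L.ncard : ℝ) = (Lf.card : ℝ) := by
    rw [Set.ncard_eq_toFinset_card']
  have hcardR : (R.ncard : ℝ) = (Rf.card : ℝ) := by
    rw [Set.ncard_eq_toFinset_card']
  set m : ℝ := (G.edgeFinset.card : ℝ) with hm
  have hSL : ∑ v ∈ Lf, (G.degree v : ℝ) = m := by
    rw [hm, ← sum_degree_part G L R hbip]; push_cast; rfl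
  have hSR : ∑ v ∈ Rf, (G.degree v : ℝ) = m := by
    rw [hm, ← sum_degree_part G R L hbipR]; push_cast; rfl
  -- x ⬝ᵥ x
  have h1 : x ⬝ᵥ x = α ^ 2 * L.ncard + β ^ 2 * R.ncard := by
    rw [dotProduct, split, hcardL, hcardR]
    rw [Finset.sum_congr rfl (fun v hv => by
      rw [hxL v (Set.mem_toFinset.mp hv)]),
      Finset.sum_congr (rfl : Rf = Rf) (fun v hv => by
      rw [hxR v (Set.mem_toFinset.mp hv)])]
    simp [Finset.sum_const, mul_comm]
    ring
  -- degree part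
  have hD : x ⬝ᵥ (degMat G *ᵥ x) = α ^ 2 * m + β ^ 2 * m := by
    have : ∀ v, x v * (degMat G *ᵥ x) v = (G.degree v : ℝ) * (x v * x v) := by
      intro v
      rw [degMat, Matrix.mulVec_diagonal, deg_eq_degree]
      ring
    rw [dotProduct]
    simp_rw [this]
    rw [split]
    rw [Finset.sum_congr rfl (fun v hv => by rw [hxL v (Set.mem_toFinset.mp hv)]),
        Finset.sum_congr (rfl : Rf = Rf) (fun v hv => by rw [hxR v (Set.mem_toFinset.mp hv)])]
    have e1 : ∑ v ∈ Lf, (G.degree v : ℝ) * (α * α) = (∑ v ∈ Lf, (G.degree v : ℝ)) * (α * α) := by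
      rw [Finset.sum_mul]
    have e2 : ∑ v ∈ Rf, (G.degree v : ℝ) * (β * β) = (∑ v ∈ Rf, (G.degree v : ℝ)) * (β * β) := by
      rw [Finset.sum_mul]
    rw [e1, e2, hSL, hSR]; ring
  -- adjacency part
  have hrow : ∀ u, (adjMat G *ᵥ x) u = (if u ∈ L then β else α) * G.degree u := by
    intro u
    have : (adjMat G *ᵥ x) u = ∑ v ∈ G.neighborFinset u, x v := by
      rw [Matrix.mulVec, dotProduct, SimpleGraph.neighborFinset_eq_filter, Finset.sum_filter]
      refine Finset.sum_congr rfl fun v _ => ?_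
      by_cases h : G.Adj u v <;> simp [adjMat, h]
    rw [this]
    by_cases hu : u ∈ L
    · rw [Finset.sum_congr rfl (fun v hv => hxR v
        (hLR hu (SimpleGraph.mem_neighborFinset _ _ _ |>.mp hv)))]
      rw [Finset.sum_const, nsmul_eq_mul, if_pos hu, SimpleGraph.degree, mul_comm]
    · have hu' : u ∈ R := hmemR u hu
      rw [Finset.sum_congr rfl (fun v hv => hxL v
        (hRL hu' (SimpleGraph.mem_neighborFinset _ _ _ |>.mp hv)))]
      rw [Finset.sum_const, nsmul_eq_mul, if_neg hu, SimpleGraph.degree, mul_comm]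
  have hA : x ⬝ᵥ (adjMat G *ᵥ x) = 2 * α * β * m := by
    rw [dotProduct]
    simp_rw [hrow]
    rw [split]
    rw [Finset.sum_congr rfl (fun v hv => by
        have h := Set.mem_toFinset.mp hv
        rw [hxL v h, if_pos h]),
      Finset.sum_congr (rfl : Rf = Rf) (fun v hv => by
        have h := Set.mem_toFinset.mp hv
        rw [hxR v h, if_neg (Set.disjoint_right.mp hbip.disj h)])]
    have e1 : ∑ v ∈ Lf, α * (β * (G.degree v : ℝ)) = α * β * ∑ v ∈ Lf, (G.degree v : ℝ) := by
      rw [Finset.mul_sum]; ring_nf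
    have e2 : ∑ v ∈ Rf, β * (α * (G.degree v : ℝ)) = α * β * ∑ v ∈ Rf, (G.degree v : ℝ) := by
      rw [Finset.mul_sum]; ring_nf
    rw [e1, e2, hSL, hSR]; ring
  -- combine
  have hx := (posSemidef_iff_dotProduct_mulVec.mp hpsd).2 x
  have hstar : star x = x := by ext v; simp
  rw [hstar] at hx
  have hexp : x ⬝ᵥ (betheHessian G t *ᵥ x)
      = t ^ 2 * ((x ⬝ᵥ (degMat G *ᵥ x)) - x ⬝ᵥ x) - t * (x ⬝ᵥ (adjMat G *ᵥ x)) + x ⬝ᵥ x := by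
    simp [betheHessian, Matrix.add_mulVec, Matrix.sub_mulVec, Matrix.smul_mulVec,
      Matrix.one_mulVec, dotProduct_add, dotProduct_sub, dotProduct_smul, smul_eq_mul]
  rw [hexp, h1, hD, hA] at hx
  nlinarith [hx]

/-- Lemma `lem:bipartite-avg-degree`: for a finite bipartite graph with average degrees
`d₁ = |E|/|L|`, `d₂ = |E|/|R|`, if the Bethe Hessian `H_G(t)` is positive semidefinite
for some `t ∈ (−1,1) \ {0}`, then `(d₁−1)(d₂−1) ≤ 1/t²`. -/
theorem bipartite_average_degree_bound {V : Type} [Fintype V]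
    (G : SimpleGraph V) (L R : Set V) (hbip : IsBipartition G L R)
    (hL : L.Nonempty) (hR : R.Nonempty)
    (d₁ d₂ : ℝ)
    (hd₁ : d₁ = (G.edgeSet.ncard : ℝ) / (L.ncard : ℝ))
    (hd₂ : d₂ = (G.edgeSet.ncard : ℝ) / (R.ncard : ℝ))
    (t : ℝ) (ht0 : t ≠ 0) (htlo : -1 < t) (hthi : t < 1)
    (hpsd : (betheHessian G t).PosSemidef) :
    (d₁ - 1) * (d₂ - 1) ≤ 1 / t ^ 2 := by
  subst hd₁ hd₂
  set m : ℝ := (G.edgeSet.ncard : ℝ) with hmdef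
  set ℓ : ℝ := (L.ncard : ℝ) with hldef
  set r : ℝ := (R.ncard : ℝ) with hrdef
  have hm0 : 0 ≤ m := by positivity
  have hℓ : 0 < ℓ := by
    rw [hldef]; exact_mod_cast (Set.ncard_pos (Set.toFinite L)).mpr hL
  have hr : 0 < r := by
    rw [hrdef]; exact_mod_cast (Set.ncard_pos (Set.toFinite R)).mpr hR
  have ht2 : 0 < t ^ 2 := by positivity
  have h1t : 0 < 1 - t ^ 2 := by nlinarith
  have hmE : m = (G.edgeFinset.card : ℝ) := by
    rw [hmdef, ← SimpleGraph.coe_edgeFinset, Set.ncard_coe_finset]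
  have h := quad_ineq G L R hbip t (t * m) (t ^ 2 * m + (1 - t ^ 2) * ℓ) hpsd
  rw [← hmE, ← hldef, ← hrdef] at h
  have hA1 : 0 < t ^ 2 * m + (1 - t ^ 2) * ℓ := by nlinarith
  have hid : 0 ≤ (t ^ 2 * m + (1 - t ^ 2) * ℓ) *
      ((t ^ 2 * m + (1 - t ^ 2) * ℓ) * (t ^ 2 * m + (1 - t ^ 2) * r) - (t * m) ^ 2) := by
    nlinarith [h]
  have hdet : (t * m) ^ 2 ≤ (t ^ 2 * m + (1 - t ^ 2) * ℓ) * (t ^ 2 * m + (1 - t ^ 2) * r) := by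
    nlinarith [hid, hA1]
  have key : t ^ 2 * ((m - ℓ) * (m - r)) ≤ ℓ * r := by
    nlinarith [hdet, h1t]
  have heq : (m / ℓ - 1) * (m / r - 1) = ((m - ℓ) * (m - r)) / (ℓ * r) := by
    field_simp
  rw [heq, div_le_div_iff₀ (by positivity) ht2]
  nlinarith [key]

end UNE
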